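/- Let ρ₁, ρ₂ ≥ 0 be real numbers, H₁ an N₁×M₁ complex matrix, H₂ an N₂×M₁ complex matrix, and Q an M₁×M₂ complex matrix with Q Q† ⪯ I_{M₁}. Then I_{N₁} + ρ₁ H₁ H₁† − [√(ρ₁ρ₂) H₁ H₂†, √ρ₁ H₁ Q] · [[I_{N₂} + ρ₂ H₂ H₂†, √ρ₂ H₂ Q], [√ρ₂ Q† H₂†, I_{M₂}]]^{-1} · [√(ρ₁ρ₂) H₂ H₁†; √ρ₁ Q† H₁†] ⪯ I_{N₁} + ρ₁ H₁ H₁† − ρ₁ ρ₂ H₁ H₂† (I_{N₂} + ρ₂ H₂ H₂†)^{-1} H₂ H₁†. (The inner 2×2 block matrix is positive definite, hence invertible, and I_{N₂} + ρ₂ H₂ H₂† is positive definite, hence invertible.) -/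

import Mathlib

open scoped ComplexOrder Matrix
open Matrix

private lemma smul_psd {n : Type*} [Fintype n] {M : Matrix n n ℂ}
    (hM : M.PosSemidef) {c : ℝ} (hc : 0 ≤ c) : ((c : ℂ) • M).PosSemidef := by
  rw [Matrix.posSemidef_iff_dotProduct_mulVec]
  constructor
  · show ((c:ℂ) • M)ᴴ = _
    rw [conjTranspose_smul, hM.1, Complex.star_def, Complex.conj_ofReal]
  · intro x
    rw [smul_mulVec, dotProduct_smul, smul_eq_mul]
    exact mul_nonneg (by exact Complex.zero_le_real.mpr hc) (hM.dotProduct_mulVec_nonneg x)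

private lemma inv_sub_inv_psd {n : Type*} [Fintype n] [DecidableEq n] {A B : Matrix n n ℂ}
    (hA : A.PosDef) (hBA : (B - A).PosSemidef) : (A⁻¹ - B⁻¹).PosSemidef := by
  have hB : B.PosDef := by simpa using hA.add_posSemidef hBA
  haveI := hA.isUnit.invertible
  haveI := hB.isUnit.invertible
  have key : A⁻¹ - B⁻¹ =
      (A⁻¹ - B⁻¹)ᴴ * A * (A⁻¹ - B⁻¹) + (B⁻¹)ᴴ * (B - A) * B⁻¹ := by
    rw [conjTranspose_sub, hA.1.inv, hB.1.inv]
    simp only [Matrix.sub_mul, Matrix.mul_sub, Matrix.mul_assoc,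
      Matrix.inv_mul_of_invertible, Matrix.mul_inv_of_invertible,
      Matrix.inv_mul_cancel_left_of_invertible, Matrix.mul_inv_cancel_left_of_invertible,
      Matrix.mul_one, Matrix.one_mul]
    abel
  rw [key]
  exact (hA.posSemidef.conjTranspose_mul_mul_same _).add (hBA.conjTranspose_mul_mul_same _)

private lemma posDef_fromBlocks₂₂' {m n : Type*} [Fintype m] [DecidableEq m] [Fintype n]
    [DecidableEq n] {A : Matrix m m ℂ} {Bm : Matrix m n ℂ} {D : Matrix n n ℂ}
    (hD : D.PosDef) (hS : (A - Bm * D⁻¹ * Bmᴴ).PosDef) :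
    (Matrix.fromBlocks A Bm Bmᴴ D).PosDef := by
  haveI := hD.isUnit.invertible
  refine Matrix.PosDef.of_dotProduct_mulVec_pos ((Matrix.IsHermitian.fromBlocks₂₂ _ _ hD.1).mpr hS.1) fun x hx => ?_
  rw [← Sum.elim_comp_inl_inr x, Matrix.dotProduct_mulVec,
    Matrix.schur_complement_eq₂₂ A Bm _ _ hD.1]
  by_cases h1 : x ∘ Sum.inl = 0
  · have h2 : x ∘ Sum.inr ≠ 0 := by
      intro h2; apply hx; ext (i | i)
      · exact congrFun h1 i
      · exact congrFun h2 i
    rw [h1]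
    simp only [Matrix.mulVec_zero, zero_add, star_zero, Matrix.zero_vecMul,
      zero_dotProduct, add_zero]
    rw [← Matrix.dotProduct_mulVec]
    exact hD.dotProduct_mulVec_pos h2
  · apply add_pos_of_nonneg_of_pos
    · rw [← Matrix.dotProduct_mulVec]; exact hD.posSemidef.dotProduct_mulVec_nonneg _
    · rw [← Matrix.dotProduct_mulVec]; exact hS.dotProduct_mulVec_pos h1

private lemma psd_fromBlocks_diag {m n : Type*} [Fintype m] [DecidableEq m] [Fintype n]
    [DecidableEq n] {D : Matrix n n ℂ} (hD : D.PosSemidef) :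
    (Matrix.fromBlocks (0 : Matrix m m ℂ) 0 0 D).PosSemidef := by
  have h : Matrix.fromBlocks (0 : Matrix m m ℂ) 0 0 D =
      (Matrix.fromRows (0 : Matrix m n ℂ) (1 : Matrix n n ℂ)) * D *
        (Matrix.fromRows (0 : Matrix m n ℂ) (1 : Matrix n n ℂ))ᴴ := by
    rw [Matrix.conjTranspose_fromRows_eq_fromCols_conjTranspose, Matrix.fromRows_mul,
      Matrix.fromRows_mul_fromCols]
    simp
  rw [h]
  exact hD.mul_mul_conjTranspose_same _

private lemma fromBlocks_sub {l m n o : Type*} {a a' : Matrix n l ℂ} {b b' : Matrix n m ℂ}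
    {c c' : Matrix o l ℂ} {d d' : Matrix o m ℂ} :
    Matrix.fromBlocks a b c d - Matrix.fromBlocks a' b' c' d' =
      Matrix.fromBlocks (a - a') (b - b') (c - c') (d - d') := by
  ext (i | i) (j | j) <;> simp [Matrix.fromBlocks]

theorem schur_complement_loewner_le {M₁ M₂ N₁ N₂ : ℕ} (ρ₁ ρ₂ : ℝ) (hρ₁ : 0 ≤ ρ₁) (hρ₂ : 0 ≤ ρ₂)
    (H₁ : Matrix (Fin N₁) (Fin M₁) ℂ) (H₂ : Matrix (Fin N₂) (Fin M₁) ℂ)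
    (Q : Matrix (Fin M₁) (Fin M₂) ℂ)
    (hQ : ((1 : Matrix (Fin M₁) (Fin M₁) ℂ) - Q * Qᴴ).PosSemidef) :
    (((1 : Matrix (Fin N₁) (Fin N₁) ℂ) + (ρ₁ : ℂ) • (H₁ * H₁ᴴ) -
        (ρ₁ * ρ₂ : ℝ) •
          (H₁ * H₂ᴴ * ((1 : Matrix (Fin N₂) (Fin N₂) ℂ) + (ρ₂ : ℂ) • (H₂ * H₂ᴴ))⁻¹ *
            (H₂ * H₁ᴴ))) -
      ((1 : Matrix (Fin N₁) (Fin N₁) ℂ) + (ρ₁ : ℂ) • (H₁ * H₁ᴴ) -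
        Matrix.fromCols ((Real.sqrt (ρ₁ * ρ₂) : ℂ) • (H₁ * H₂ᴴ))
            ((Real.sqrt ρ₁ : ℂ) • (H₁ * Q)) *
          (Matrix.fromBlocks ((1 : Matrix (Fin N₂) (Fin N₂) ℂ) + (ρ₂ : ℂ) • (H₂ * H₂ᴴ))
            ((Real.sqrt ρ₂ : ℂ) • (H₂ * Q)) ((Real.sqrt ρ₂ : ℂ) • (Qᴴ * H₂ᴴ))
            (1 : Matrix (Fin M₂) (Fin M₂) ℂ))⁻¹ *
          Matrix.fromRows ((Real.sqrt (ρ₁ * ρ₂) : ℂ) • (H₂ * H₁ᴴ))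
            ((Real.sqrt ρ₁ : ℂ) • (Qᴴ * H₁ᴴ)))).PosSemidef := by
  have hs₁ : (Real.sqrt ρ₁ : ℂ) * (Real.sqrt ρ₁ : ℂ) = (ρ₁ : ℂ) := by
    rw [← Complex.ofReal_mul, Real.mul_self_sqrt hρ₁]
  have hs₂ : (Real.sqrt ρ₂ : ℂ) * (Real.sqrt ρ₂ : ℂ) = (ρ₂ : ℂ) := by
    rw [← Complex.ofReal_mul, Real.mul_self_sqrt hρ₂]
  have hst₁ : star (Real.sqrt ρ₁ : ℂ) = (Real.sqrt ρ₁ : ℂ) := by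
    rw [Complex.star_def, Complex.conj_ofReal]
  have hst₂ : star (Real.sqrt ρ₂ : ℂ) = (Real.sqrt ρ₂ : ℂ) := by
    rw [Complex.star_def, Complex.conj_ofReal]
  have hs₁₂ : (Real.sqrt (ρ₁ * ρ₂) : ℂ) = (Real.sqrt ρ₁ : ℂ) * (Real.sqrt ρ₂ : ℂ) := by
    rw [Real.sqrt_mul hρ₁, Complex.ofReal_mul]
  set G : Matrix (Fin N₁) (Fin M₁) ℂ := (Real.sqrt ρ₁ : ℂ) • H₁ with hGdef
  set C : Matrix (Fin M₁) (Fin N₂ ⊕ Fin M₂) ℂ :=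
    Matrix.fromCols ((Real.sqrt ρ₂ : ℂ) • H₂ᴴ) Q with hCdef
  have hCT : Cᴴ = Matrix.fromRows ((Real.sqrt ρ₂ : ℂ) • H₂) Qᴴ := by
    rw [hCdef, Matrix.conjTranspose_fromCols_eq_fromRows_conjTranspose,
      Matrix.conjTranspose_smul, hst₂, Matrix.conjTranspose_conjTranspose]
  -- rewrite the ₂₁ block as a conjTranspose
  have hb : (Real.sqrt ρ₂ : ℂ) • (Qᴴ * H₂ᴴ) = ((Real.sqrt ρ₂ : ℂ) • (H₂ * Q))ᴴ := by
    rw [Matrix.conjTranspose_smul, hst₂, Matrix.conjTranspose_mul]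
  rw [hb]
  set A : Matrix (Fin N₂) (Fin N₂) ℂ := 1 + (ρ₂ : ℂ) • (H₂ * H₂ᴴ) with hAdef
  set B : Matrix (Fin N₂ ⊕ Fin M₂) (Fin N₂ ⊕ Fin M₂) ℂ :=
    Matrix.fromBlocks A ((Real.sqrt ρ₂ : ℂ) • (H₂ * Q)) (((Real.sqrt ρ₂ : ℂ) • (H₂ * Q))ᴴ) 1
    with hBdef
  -- the partitioned factors
  have hX : Matrix.fromCols ((Real.sqrt (ρ₁ * ρ₂) : ℂ) • (H₁ * H₂ᴴ))
      ((Real.sqrt ρ₁ : ℂ) • (H₁ * Q)) = G * C := by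
    rw [hGdef, hCdef, Matrix.mul_fromCols]
    simp only [Matrix.smul_mul, Matrix.mul_smul, smul_smul, hs₁₂,
      mul_comm (Real.sqrt ρ₂ : ℂ) (Real.sqrt ρ₁ : ℂ)]
  have hXr : Matrix.fromRows ((Real.sqrt (ρ₁ * ρ₂) : ℂ) • (H₂ * H₁ᴴ))
      ((Real.sqrt ρ₁ : ℂ) • (Qᴴ * H₁ᴴ)) = Cᴴ * Gᴴ := by
    have h1 : Cᴴ * Gᴴ = (G * C)ᴴ := (Matrix.conjTranspose_mul G C).symm
    rw [h1, ← hX, Matrix.conjTranspose_fromCols_eq_fromRows_conjTranspose]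
    simp only [Matrix.conjTranspose_smul, Matrix.conjTranspose_mul,
      Matrix.conjTranspose_conjTranspose, Complex.star_def, Complex.conj_ofReal]
  rw [hX, hXr]
  -- basic positive-definiteness facts
  have hQc : ((ρ₂ : ℂ) • (H₂ * (1 - Q * Qᴴ) * H₂ᴴ)).PosSemidef :=
    smul_psd (hQ.mul_mul_conjTranspose_same H₂) hρ₂
  have hApd : A.PosDef :=
    Matrix.PosDef.one.add_posSemidef (smul_psd (Matrix.posSemidef_self_mul_conjTranspose H₂) hρ₂)
  set T : Matrix (Fin N₂ ⊕ Fin M₂) (Fin N₂ ⊕ Fin M₂) ℂ := 1 + Cᴴ * C with hTdef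
  set K : Matrix (Fin M₁) (Fin M₁) ℂ := 1 + C * Cᴴ with hKdef
  set L : Matrix (Fin M₁) (Fin M₁) ℂ := 1 + (ρ₂ : ℂ) • (H₂ᴴ * H₂) with hLdef
  have hTpd : T.PosDef :=
    Matrix.PosDef.one.add_posSemidef (Matrix.posSemidef_conjTranspose_mul_self C)
  have hKpd : K.PosDef :=
    Matrix.PosDef.one.add_posSemidef (Matrix.posSemidef_self_mul_conjTranspose C)
  have hLpd : L.PosDef :=
    Matrix.PosDef.one.add_posSemidef (smul_psd (Matrix.posSemidef_conjTranspose_mul_self H₂) hρ₂)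
  have hBpd : B.PosDef := by
    refine posDef_fromBlocks₂₂' Matrix.PosDef.one ?_
    have he : A - ((Real.sqrt ρ₂ : ℂ) • (H₂ * Q)) * (1 : Matrix (Fin M₂) (Fin M₂) ℂ)⁻¹ *
        ((Real.sqrt ρ₂ : ℂ) • (H₂ * Q))ᴴ = 1 + (ρ₂ : ℂ) • (H₂ * (1 - Q * Qᴴ) * H₂ᴴ) := by
      rw [inv_one, Matrix.mul_one, Matrix.conjTranspose_smul, hst₂, Matrix.conjTranspose_mul,
        Matrix.smul_mul, Matrix.mul_smul, smul_smul, hs₂, hAdef]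
      rw [Matrix.mul_sub, Matrix.sub_mul, Matrix.mul_one, smul_sub]
      simp only [Matrix.mul_assoc]
      abel
    rw [he]
    exact Matrix.PosDef.one.add_posSemidef hQc
  -- C^H C as a block matrix, and T - B
  have hCC : Cᴴ * C = Matrix.fromBlocks ((ρ₂ : ℂ) • (H₂ * H₂ᴴ))
      ((Real.sqrt ρ₂ : ℂ) • (H₂ * Q)) (((Real.sqrt ρ₂ : ℂ) • (H₂ * Q))ᴴ) (Qᴴ * Q) := by
    rw [hCT, hCdef, Matrix.fromRows_mul_fromCols]
    simp only [Matrix.smul_mul, Matrix.mul_smul, smul_smul, hs₂, Matrix.conjTranspose_smul,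
      hst₂, Matrix.conjTranspose_mul]
  have hTB : (T - B).PosSemidef := by
    have he : T - B = Matrix.fromBlocks 0 0 0 (Qᴴ * Q) := by
      rw [hTdef, hCC, hBdef, ← Matrix.fromBlocks_one, Matrix.fromBlocks_add, fromBlocks_sub,
        hAdef, Matrix.fromBlocks_inj]
      refine ⟨?_, ?_, ?_, ?_⟩ <;> abel
    rw [he]
    exact psd_fromBlocks_diag (Matrix.posSemidef_conjTranspose_mul_self Q)
  have hKL : (K - L).PosSemidef := by
    have he : K - L = Q * Qᴴ := by
      rw [hKdef, hLdef, hCdef, hCT, Matrix.fromCols_mul_fromRows,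
        Matrix.smul_mul, Matrix.mul_smul, smul_smul, hs₂]
      abel
    rw [he]
    exact Matrix.posSemidef_self_mul_conjTranspose Q
  haveI := hApd.isUnit.invertible
  haveI := hBpd.isUnit.invertible
  haveI := hTpd.isUnit.invertible
  haveI := hKpd.isUnit.invertible
  haveI := hLpd.isUnit.invertible
  -- push-through identities
  have hpush1 : C * T⁻¹ * Cᴴ = 1 - K⁻¹ := by
    have hKC : K * C = C * T := by
      rw [hKdef, hTdef]
      simp only [Matrix.add_mul, Matrix.mul_add, Matrix.one_mul, Matrix.mul_one,
        Matrix.mul_assoc]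
    have hCTi : C * T⁻¹ = K⁻¹ * C := by
      rw [← Matrix.inv_mul_cancel_left_of_invertible K (C * T⁻¹), ← Matrix.mul_assoc K C, hKC,
        Matrix.mul_assoc, Matrix.mul_inv_of_invertible, Matrix.mul_one]
    have hCCh : C * Cᴴ = K - 1 := by rw [hKdef]; abel
    rw [hCTi, Matrix.mul_assoc, hCCh, Matrix.mul_sub, Matrix.mul_one,
      Matrix.inv_mul_of_invertible]
  have hpush2 : (ρ₂ : ℂ) • (H₂ᴴ * A⁻¹ * H₂) = 1 - L⁻¹ := by
    have hAH : A * H₂ = H₂ * L := by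
      rw [hAdef, hLdef]
      simp only [Matrix.add_mul, Matrix.mul_add, Matrix.one_mul, Matrix.mul_one,
        Matrix.smul_mul, Matrix.mul_smul, Matrix.mul_assoc]
    have hAiH : A⁻¹ * H₂ = H₂ * L⁻¹ := by
      rw [← Matrix.inv_mul_cancel_left_of_invertible A (H₂ * L⁻¹), ← Matrix.mul_assoc A H₂, hAH,
        Matrix.mul_assoc, Matrix.mul_inv_of_invertible, Matrix.mul_one]
    have hLL : (ρ₂ : ℂ) • (H₂ᴴ * H₂) = L - 1 := by rw [hLdef]; abel
    rw [Matrix.mul_assoc, hAiH, ← Matrix.mul_assoc, ← Matrix.smul_mul, hLL,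
      Matrix.sub_mul, Matrix.one_mul, Matrix.mul_inv_of_invertible]
  -- monotonicity of the inverse
  have hmono1 : (B⁻¹ - T⁻¹).PosSemidef := inv_sub_inv_psd hBpd hTB
  have hmono2 : (L⁻¹ - K⁻¹).PosSemidef := inv_sub_inv_psd hLpd hKL
  -- final assembly
  have hreal : (ρ₁ * ρ₂ : ℝ) • (H₁ * H₂ᴴ * A⁻¹ * (H₂ * H₁ᴴ)) =
      G * ((ρ₂ : ℂ) • (H₂ᴴ * A⁻¹ * H₂)) * Gᴴ := by
    have h0 : (ρ₁ * ρ₂ : ℝ) • (H₁ * H₂ᴴ * A⁻¹ * (H₂ * H₁ᴴ)) =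
        ((ρ₁ : ℂ) * (ρ₂ : ℂ)) • (H₁ * H₂ᴴ * A⁻¹ * (H₂ * H₁ᴴ)) := by
      ext i j
      simp [Complex.real_smul, Complex.ofReal_mul, mul_assoc]
    rw [h0, hGdef, Matrix.conjTranspose_smul, hst₁]
    simp only [Matrix.smul_mul, Matrix.mul_smul, smul_smul]
    congr 1
    · rw [← hs₁]; ring
    · simp only [Matrix.mul_assoc]
  have hgoal : (1 + (ρ₁ : ℂ) • (H₁ * H₁ᴴ) -
        (ρ₁ * ρ₂ : ℝ) • (H₁ * H₂ᴴ * A⁻¹ * (H₂ * H₁ᴴ))) -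
      (1 + (ρ₁ : ℂ) • (H₁ * H₁ᴴ) - G * C * B⁻¹ * (Cᴴ * Gᴴ)) =
      G * (C * (B⁻¹ - T⁻¹) * Cᴴ) * Gᴴ + G * (L⁻¹ - K⁻¹) * Gᴴ := by
    rw [hreal, hpush2]
    have hexp : C * (B⁻¹ - T⁻¹) * Cᴴ = C * B⁻¹ * Cᴴ - (1 - K⁻¹) := by
      rw [Matrix.mul_sub, Matrix.sub_mul, ← hpush1]
    rw [hexp]
    simp only [Matrix.mul_sub, Matrix.sub_mul, Matrix.mul_add, Matrix.add_mul,
      Matrix.mul_one, Matrix.one_mul, Matrix.mul_assoc]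
    abel
  rw [hgoal]
  exact ((hmono1.mul_mul_conjTranspose_same C).mul_mul_conjTranspose_same G).add
    (hmono2.mul_mul_conjTranspose_same G)
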